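/- For any positive integer q, Σ_{χ mod q} log q_χ = φ(q)·( log q − Σ_{p|q} (log p)/(p−1) ), where q_χ denotes the conductor of the Dirichlet character χ. Moreover, if a is a reduced residue modulo q with a ≢ 1 (mod q), then Σ_{χ mod q} χ(a)·log q_χ = −φ(q)·Λ(q/gcd(q,a−1))/φ(q/gcd(q,a−1)), as an identity of complex numbers. -/

import Mathlib

open DirichletCharacter Complex ArithmeticFunction

noncomputable section


open DirichletCharacter


lemma coprime_of_modEq' {a b d : ℕ} (h : a ≡ b [MOD d]) (hb : Nat.Coprime b d) :
    Nat.Coprime a d := by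
  have hg : Nat.gcd d a = Nat.gcd d b := by
    rw [Nat.gcd_rec d a, Nat.gcd_rec d b, h]
  have := hb
  unfold Nat.Coprime at this ⊢
  rw [Nat.gcd_comm, hg, Nat.gcd_comm]
  exact this

variable {R : Type*} [CommMonoidWithZero R] {n : ℕ} [NeZero n] (χ : DirichletCharacter R n)

lemma factorsThrough_gcd {d₁ d₂ : ℕ} (h₁ : χ.FactorsThrough d₁) (h₂ : χ.FactorsThrough d₂) :
    χ.FactorsThrough (Nat.gcd d₁ d₂) := by
  have hd₁ : d₁ ∣ n := h₁.dvd
  have hd₂ : d₂ ∣ n := h₂.dvd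
  have hg : Nat.gcd d₁ d₂ ∣ n := (Nat.gcd_dvd_left d₁ d₂).trans hd₁
  have hL : Nat.lcm d₁ d₂ ∣ n := Nat.lcm_dvd hd₁ hd₂
  rw [factorsThrough_iff_ker_unitsMap hg]
  rw [factorsThrough_iff_ker_unitsMap hd₁] at h₁
  rw [factorsThrough_iff_ker_unitsMap hd₂] at h₂
  intro x hx
  -- u : the natural number representing x
  set u : ℕ := (x : ZMod n).val with hu
  have hun : Nat.Coprime u n := ZMod.val_coe_unit_coprime x
  -- x ≡ 1 mod gcd
  have hmodg : u ≡ 1 [MOD Nat.gcd d₁ d₂] := by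
    rw [MonoidHom.mem_ker] at hx
    have : ((u : ZMod (Nat.gcd d₁ d₂))) = 1 := by
      have := congrArg (Units.val) hx
      rwa [ZMod.unitsMap_def, Units.coe_map, MonoidHom.coe_coe, ZMod.castHom_apply,
        ← ZMod.natCast_val] at this
    rwa [← Nat.cast_one, ZMod.natCast_eq_natCast_iff] at this
  obtain ⟨w, hw₁, hw₂⟩ := Nat.chineseRemainder' hmodg
  -- w is coprime to lcm d₁ d₂
  have hcop₁ : Nat.Coprime w d₁ := by
    have : Nat.Coprime u d₁ := (Nat.Coprime.coprime_dvd_right hd₁ hun)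
    exact coprime_of_modEq' hw₁ this
  have hcop₂ : Nat.Coprime w d₂ := by
    have : Nat.Coprime 1 d₂ := Nat.coprime_one_left d₂
    exact coprime_of_modEq' hw₂ this
  have hcopL : Nat.Coprime w (Nat.lcm d₁ d₂) := Nat.Coprime.coprime_dvd_right (Nat.lcm_dvd_mul d₁ d₂) (Nat.Coprime.mul_right hcop₁ hcop₂)
  have : NeZero (Nat.lcm d₁ d₂) := ⟨fun h => (NeZero.ne n) (Nat.eq_zero_of_zero_dvd (h ▸ hL))⟩
  set W₀ : (ZMod (Nat.lcm d₁ d₂))ˣ := ZMod.unitOfCoprime w hcopL with hW₀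
  obtain ⟨W, hW⟩ := ZMod.unitsMap_surjective hL W₀
  -- castHom to d₂ of W is 1
  have hWd : ∀ (d : ℕ) (hd : d ∣ n) (hdL : d ∣ Nat.lcm d₁ d₂),
      ((ZMod.unitsMap hd W : (ZMod d)ˣ) : ZMod d) = (w : ZMod d) := by
    intro d hd hdL
    have : ZMod.unitsMap hd W = ZMod.unitsMap hdL (ZMod.unitsMap hL W) := by
      rw [← MonoidHom.comp_apply, ZMod.unitsMap_comp]
    rw [this, hW, ZMod.unitsMap_def, Units.coe_map, MonoidHom.coe_coe]
    have : ((W₀ : ZMod (Nat.lcm d₁ d₂))) = (w : ZMod (Nat.lcm d₁ d₂)) := by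
      simp [hW₀, ZMod.coe_unitOfCoprime]
    rw [this, ZMod.castHom_apply, ZMod.cast_natCast hdL]
  have hW2 : W ∈ (ZMod.unitsMap hd₂).ker := by
    rw [MonoidHom.mem_ker]
    apply Units.ext
    rw [hWd d₂ hd₂ (Nat.dvd_lcm_right d₁ d₂), Units.val_one]
    rw [← Nat.cast_one, ZMod.natCast_eq_natCast_iff]
    exact hw₂
  have hXW1 : x * W⁻¹ ∈ (ZMod.unitsMap hd₁).ker := by
    rw [MonoidHom.mem_ker, map_mul, map_inv]
    have hx1 : ((ZMod.unitsMap hd₁ x : (ZMod d₁)ˣ) : ZMod d₁) = (u : ZMod d₁) := by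
      rw [ZMod.unitsMap_def, Units.coe_map, MonoidHom.coe_coe, ZMod.castHom_apply,
        ← ZMod.natCast_val]
    have hweq : ((ZMod.unitsMap hd₁ W : (ZMod d₁)ˣ) : ZMod d₁) = (u : ZMod d₁) := by
      rw [hWd d₁ hd₁ (Nat.dvd_lcm_left d₁ d₂), ZMod.natCast_eq_natCast_iff]
      exact hw₁
    have : ZMod.unitsMap hd₁ x = ZMod.unitsMap hd₁ W := Units.ext (by rw [hx1, hweq])
    rw [this, mul_inv_cancel]
  have h1 : χ.toUnitHom (x * W⁻¹) = 1 := h₁ hXW1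
  have h2 : χ.toUnitHom W = 1 := h₂ hW2
  rw [MonoidHom.mem_ker]
  have : x = (x * W⁻¹) * W := by group
  rw [this, map_mul, h1, h2, one_mul]

lemma conductor_dvd_of_factorsThrough {d : ℕ} (h : χ.FactorsThrough d) :
    χ.conductor ∣ d := by
  have hg := factorsThrough_gcd χ (factorsThrough_conductor χ) h
  have h1 : χ.conductor ≤ Nat.gcd χ.conductor d := Nat.sInf_le hg
  have h2 : Nat.gcd χ.conductor d ≤ χ.conductor :=
    Nat.le_of_dvd (Nat.pos_of_ne_zero (conductor_ne_zero χ))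
      (Nat.gcd_dvd_left _ _)
  have : Nat.gcd χ.conductor d = χ.conductor := le_antisymm h2 h1
  exact this ▸ Nat.gcd_dvd_right _ _

section L2
variable {q : ℕ} [NeZero q]

example (n : ℕ) [NeZero n] (a : ZMod n) : True := by
  have := DirichletCharacter.sum_characters_eq ℂ a
  trivial

lemma factorsThrough_of_conductor_dvd (χ : DirichletCharacter ℂ q) {d : ℕ} (hd : d ∣ q)
    (h : χ.conductor ∣ d) : χ.FactorsThrough d := by
  refine ⟨hd, changeLevel h (χ.factorsThrough_conductor.χ₀), ?_⟩
  rw [← changeLevel_trans _ h hd]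
  exact (χ.factorsThrough_conductor).eq_changeLevel

lemma sum_chars_conductor_dvd {d : ℕ} (hd : d ∣ q) (a : ZMod q) (ha : IsUnit a) :
    ∑ χ : DirichletCharacter ℂ q, (if χ.conductor ∣ d then χ a else 0)
      = if (ZMod.castHom hd (ZMod d)) a = 1 then (d.totient : ℂ) else 0 := by
  have hd0 : NeZero d := ⟨fun h => (NeZero.ne q) (Nat.eq_zero_of_zero_dvd (h ▸ hd))⟩
  obtain ⟨u, rfl⟩ := ha
  rw [← Finset.sum_filter]
  rw [show (Finset.univ.filter (fun χ : DirichletCharacter ℂ q => χ.conductor ∣ d))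
        = Finset.image (changeLevel hd) Finset.univ from ?_]
  · rw [Finset.sum_image (fun x _ y _ h => changeLevel_injective hd h)]
    have key : ∀ ψ : DirichletCharacter ℂ d, (changeLevel hd ψ) ↑u = ψ (ZMod.cast (u : ZMod q)) :=
      fun ψ => changeLevel_eq_cast_of_dvd ψ hd u
    rw [Finset.sum_congr rfl (fun ψ _ => key ψ)]
    rw [DirichletCharacter.sum_characters_eq]
    congr 1
  · ext χ
    simp only [Finset.mem_filter, Finset.mem_univ, true_and, Finset.mem_image]
    constructor
    · intro h
      obtain ⟨_, ψ, hψ⟩ := factorsThrough_of_conductor_dvd χ hd h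
      exact ⟨ψ, hψ.symm⟩
    · rintro ⟨ψ, rfl⟩
      exact conductor_dvd_of_factorsThrough _ (changeLevel_factorsThrough ψ hd)

end L2

-- complement divisibility
lemma pow_dvd_iff_not_dvd {q p k c : ℕ} (hq : q ≠ 0) (hp : p.Prime) (hk : 1 ≤ k)
    (hc : c ∣ q) : p ^ k ∣ c ↔ ¬ (c ∣ p ^ (k - 1) * ordCompl[p] q) := by
  constructor
  · intro h1 h2
    have hpk : p ^ k ∣ p ^ (k-1) * ordCompl[p] q := h1.trans h2
    have : p ^ (k-1) * p ∣ p ^ (k-1) * ordCompl[p] q := by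
      rwa [← pow_succ, Nat.sub_add_cancel hk]
    have hpm : p ∣ ordCompl[p] q :=
      (mul_dvd_mul_iff_left (pow_ne_zero (k-1) hp.pos.ne')).mp this
    exact Nat.not_dvd_ordCompl hp hq hpm
  · intro h
    by_contra hpk
    apply h
    have hc0 : c ≠ 0 := fun h0 => hq (Nat.eq_zero_of_zero_dvd (h0 ▸ hc))
    have hv : c.factorization p ≤ k - 1 := by
      by_contra hv
      push_neg at hv
      exact hpk ((pow_dvd_pow p (Nat.le_of_pred_lt hv)).trans (Nat.ordProj_dvd c p))
    calc c = p ^ c.factorization p * ordCompl[p] c :=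
            (Nat.ordProj_mul_ordCompl_eq_self c p).symm
      _ ∣ p ^ (k-1) * ordCompl[p] q :=
            mul_dvd_mul (pow_dvd_pow p hv) (Nat.ordCompl_dvd_ordCompl_of_dvd hc p)

-- D divides q
lemma D_dvd {q p k : ℕ} (hp : p.Prime) (hkq : k ≤ q.factorization p) :
    p ^ (k - 1) * ordCompl[p] q ∣ q := by
  conv_rhs => rw [← Nat.ordProj_mul_ordCompl_eq_self q p]
  exact mul_dvd_mul (pow_dvd_pow p ((Nat.sub_le k 1).trans hkq)) dvd_rfl

-- regrouping sums over divisors into prime powers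
lemma sum_divisors_primePow {M : Type*} [AddCommMonoid M] {q : ℕ} (hq : q ≠ 0) (f : ℕ → M)
    (hf : ∀ d, ¬ IsPrimePow d → f d = 0) :
    ∑ d ∈ q.divisors, f d
      = ∑ p ∈ q.primeFactors, ∑ k ∈ Finset.Icc 1 (q.factorization p), f (p ^ k) := by
  rw [← Finset.sum_filter_add_sum_filter_not q.divisors IsPrimePow f]
  rw [Finset.sum_eq_zero (fun d hd => hf d (Finset.mem_filter.mp hd).2), add_zero]
  rw [Finset.sum_sigma' q.primeFactors (fun p => Finset.Icc 1 (q.factorization p))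
    (fun p k => f (p ^ k))]
  refine Finset.sum_nbij' (fun d => (⟨d.minFac, d.factorization d.minFac⟩ : Σ _ : ℕ, ℕ))
    (fun x => x.1 ^ x.2) ?_ ?_ ?_ ?_ ?_
  · intro d hmem
    simp only [Finset.mem_filter, Nat.mem_divisors] at hmem
    obtain ⟨⟨hdq, -⟩, hpp⟩ := hmem
    obtain ⟨p, k, hp, hk, rfl⟩ := hpp
    rw [← Nat.prime_iff] at hp
    simp only [Finset.mem_sigma, Nat.mem_primeFactors, Finset.mem_Icc]
    rw [Nat.Prime.pow_minFac hp hk.ne', hp.factorization_pow, Finsupp.single_eq_same]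
    refine ⟨⟨hp, (dvd_pow_self p hk.ne').trans hdq, hq⟩, hk, ?_⟩
    exact (Nat.Prime.pow_dvd_iff_le_factorization hp hq).mp hdq
  · rintro ⟨p, k⟩ hmem
    simp only [Finset.mem_sigma, Nat.mem_primeFactors, Finset.mem_Icc] at hmem
    obtain ⟨⟨hp, hpq, -⟩, hk1, hkq⟩ := hmem
    simp only [Finset.mem_filter, Nat.mem_divisors]
    refine ⟨⟨(Nat.Prime.pow_dvd_iff_le_factorization hp hq).mpr hkq, hq⟩, ?_⟩
    exact ⟨p, k, hp.prime, hk1, rfl⟩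
  · intro d hmem
    simp only [Finset.mem_filter, Nat.mem_divisors] at hmem
    obtain ⟨-, hpp⟩ := hmem
    obtain ⟨p, k, hp, hk, rfl⟩ := hpp
    rw [← Nat.prime_iff] at hp
    simp [Nat.Prime.pow_minFac hp hk.ne', hp.factorization_pow]
  · rintro ⟨p, k⟩ hmem
    simp only [Finset.mem_sigma, Nat.mem_primeFactors, Finset.mem_Icc] at hmem
    obtain ⟨⟨hp, -, -⟩, hk1, -⟩ := hmem
    have hk0 : k ≠ 0 := by omega
    simp [Nat.Prime.pow_minFac hp hk0, hp.factorization_pow]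
  · intro d hmem
    simp only [Finset.mem_filter, Nat.mem_divisors] at hmem
    obtain ⟨-, hpp⟩ := hmem
    obtain ⟨p, k, hp, hk, rfl⟩ := hpp
    rw [← Nat.prime_iff] at hp
    simp [Nat.Prime.pow_minFac hp hk.ne', hp.factorization_pow]

-- totient sum
lemma sum_totient_prime_pow_mul {p m K : ℕ} (hp : p.Prime) (hm : Nat.Coprime p m) (hK : 1 ≤ K) :
    ∑ k ∈ Finset.Icc 1 K, Nat.totient (p ^ (k - 1) * m) = m.totient * p ^ (K - 1) := by
  have h1 : ∀ k, Nat.totient (p ^ (k-1) * m) = Nat.totient (p ^ (k-1)) * m.totient :=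
    fun k => Nat.totient_mul (hm.pow_left _)
  simp_rw [h1]
  rw [← Finset.sum_mul, mul_comm]
  congr 1
  have h2 : ∑ k ∈ Finset.Icc 1 K, Nat.totient (p ^ (k - 1))
      = ∑ i ∈ Finset.range K, Nat.totient (p ^ i) := by
    rw [show Finset.Icc 1 K = Finset.Ico 1 (K + 1) by rfl, Finset.sum_Ico_eq_sum_range]
    simp
  have h3 : ∑ i ∈ Finset.range K, Nat.totient (p ^ i) = p ^ (K - 1) := by
    have h4 := Nat.sum_totient (p ^ (K - 1))
    rw [Nat.sum_divisors_prime_pow hp, Nat.sub_add_cancel hK] at h4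
    exact h4
  rw [h2, h3]
section L4
open DirichletCharacter ArithmeticFunction
variable {q : ℕ} [NeZero q]

lemma castHom_eq_one_iff {D : ℕ} (hD : D ∣ q) (a : ZMod q) :
    (ZMod.castHom hD (ZMod D)) a = 1 ↔ D ∣ Nat.gcd q (a - 1).val := by
  have h1 : (ZMod.castHom hD (ZMod D)) a = 1 ↔ (ZMod.castHom hD (ZMod D)) (a - 1) = 0 := by
    rw [map_sub, map_one, sub_eq_zero]
  rw [h1, ZMod.castHom_apply, ← ZMod.natCast_val, ZMod.natCast_eq_zero_iff]
  exact ⟨fun h => Nat.dvd_gcd hD h, fun h => h.trans (Nat.gcd_dvd_right _ _)⟩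

lemma log_conductor_expand (χ : DirichletCharacter ℂ q) :
    Real.log χ.conductor
      = ∑ d ∈ q.divisors, vonMangoldt d * (if d ∣ χ.conductor then 1 else 0) := by
  rw [← ArithmeticFunction.vonMangoldt_sum (n := χ.conductor), eq_comm]
  simp_rw [mul_ite, mul_one, mul_zero, ← Finset.sum_filter]
  congr 1
  rw [Nat.divisors_filter_dvd_of_dvd (NeZero.ne q) (conductor_dvd_level χ)]

lemma master (a : ZMod q) (ha : IsUnit a) :
    ∑ χ : DirichletCharacter ℂ q, χ a * (Real.log χ.conductor : ℂ) =
    ∑ p ∈ q.primeFactors, ∑ k ∈ Finset.Icc 1 (q.factorization p),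
      (Real.log p : ℂ) * ((if a = 1 then (q.totient : ℂ) else 0)
        - (if p ^ (k-1) * ordCompl[p] q ∣ Nat.gcd q (a - 1).val
           then ((p ^ (k-1) * ordCompl[p] q).totient : ℂ) else 0)) := by
  have hq : q ≠ 0 := NeZero.ne q
  have step1 : ∑ χ : DirichletCharacter ℂ q, χ a * (Real.log χ.conductor : ℂ)
      = ∑ d ∈ q.divisors, ((vonMangoldt d : ℝ) : ℂ)
          * (∑ χ : DirichletCharacter ℂ q, if d ∣ χ.conductor then χ a else 0) := by
    calc ∑ χ : DirichletCharacter ℂ q, χ a * (Real.log χ.conductor : ℂ)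
        = ∑ χ : DirichletCharacter ℂ q, ∑ d ∈ q.divisors,
            ((vonMangoldt d : ℝ) : ℂ) * (if d ∣ χ.conductor then χ a else 0) := by
          refine Finset.sum_congr rfl fun χ _ => ?_
          rw [log_conductor_expand χ]
          push_cast
          rw [Finset.mul_sum]
          refine Finset.sum_congr rfl fun d _ => ?_
          split_ifs <;> push_cast <;> ring
      _ = _ := by
          rw [Finset.sum_comm]
          simp_rw [Finset.mul_sum]
  rw [step1, sum_divisors_primePow hq _ (fun d hd => by
    rw [ArithmeticFunction.vonMangoldt_eq_zero_iff.mpr hd]; simp)]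
  refine Finset.sum_congr rfl fun p hp => Finset.sum_congr rfl fun k hk => ?_
  rw [Nat.mem_primeFactors] at hp
  rw [Finset.mem_Icc] at hk
  obtain ⟨hpp, hpq, -⟩ := hp
  obtain ⟨hk1, hke⟩ := hk
  have hΛ : vonMangoldt (p ^ k) = Real.log p := by
    rw [vonMangoldt_apply_pow (by omega), vonMangoldt_apply_prime hpp]
  rw [hΛ]
  congr 1
  have hDq : p ^ (k-1) * ordCompl[p] q ∣ q := D_dvd hpp hke
  have key : ∀ χ : DirichletCharacter ℂ q,
      (if p ^ k ∣ χ.conductor then χ a else 0)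
        = χ a - (if χ.conductor ∣ p ^ (k-1) * ordCompl[p] q then χ a else 0) := by
    intro χ
    have hcompl := pow_dvd_iff_not_dvd hq hpp hk1 (conductor_dvd_level χ)
    by_cases h : χ.conductor ∣ p ^ (k-1) * ordCompl[p] q
    · rw [if_neg (fun hh => (hcompl.mp hh) h), if_pos h, sub_self]
    · rw [if_pos (hcompl.mpr h), if_neg h, sub_zero]
  rw [Finset.sum_congr rfl (fun χ _ => key χ), Finset.sum_sub_distrib,
    DirichletCharacter.sum_characters_eq, sum_chars_conductor_dvd hDq a ha]
  rw [if_congr (castHom_eq_one_iff hDq a) rfl rfl]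

end L4
section L5
open DirichletCharacter ArithmeticFunction

lemma totient_eq_ordCompl_mul {q p : ℕ} (hq : q ≠ 0) (hp : p.Prime) (hpq : p ∣ q) :
    q.totient = (ordCompl[p] q).totient * (p ^ (q.factorization p - 1) * (p - 1)) := by
  have he : 0 < q.factorization p := hp.factorization_pos_of_dvd hq hpq
  conv_lhs => rw [← Nat.ordProj_mul_ordCompl_eq_self q p]
  rw [Nat.totient_mul ((Nat.coprime_ordCompl hp hq).pow_left _),
    Nat.totient_prime_pow hp he, mul_comm]

theorem sum_log_conductor' (q : ℕ) [NeZero q] :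
    (∑ χ : DirichletCharacter ℂ q, Real.log χ.conductor) =
      (q.totient : ℝ) * (Real.log q - ∑ p ∈ q.primeFactors, Real.log p / (p - 1)) := by
  have hq : q ≠ 0 := NeZero.ne q
  have h1 := master (q := q) 1 isUnit_one
  simp only [MulChar.map_one, one_mul, if_pos rfl, sub_self, ZMod.val_zero,
    Nat.gcd_zero_right, eq_self_iff_true, if_true, ite_true] at h1
  -- all divisibility conditions hold
  have h2 : ∑ p ∈ q.primeFactors, ∑ k ∈ Finset.Icc 1 (q.factorization p),
      (Real.log p : ℂ) * ((q.totient : ℂ)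
        - (if p ^ (k-1) * ordCompl[p] q ∣ q
           then ((p ^ (k-1) * ordCompl[p] q).totient : ℂ) else 0))
      = ∑ p ∈ q.primeFactors, ∑ k ∈ Finset.Icc 1 (q.factorization p),
      (Real.log p : ℂ) * ((q.totient : ℂ) - ((p ^ (k-1) * ordCompl[p] q).totient : ℂ)) := by
    refine Finset.sum_congr rfl fun p hp => Finset.sum_congr rfl fun k hk => ?_
    rw [Nat.mem_primeFactors] at hp
    rw [Finset.mem_Icc] at hk
    rw [if_pos (D_dvd hp.1 hk.2)]
  rw [h2] at h1
  -- move to ℝ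
  have h3 : (∑ χ : DirichletCharacter ℂ q, ((Real.log χ.conductor : ℝ) : ℂ))
      = ((∑ χ : DirichletCharacter ℂ q, Real.log χ.conductor : ℝ) : ℂ) := by push_cast; rfl
  rw [h3] at h1
  have h4 : ∑ p ∈ q.primeFactors, ∑ k ∈ Finset.Icc 1 (q.factorization p),
      (Real.log p : ℂ) * ((q.totient : ℂ) - ((p ^ (k-1) * ordCompl[p] q).totient : ℂ))
      = ((∑ p ∈ q.primeFactors, ∑ k ∈ Finset.Icc 1 (q.factorization p),
      Real.log p * ((q.totient : ℝ) - ((p ^ (k-1) * ordCompl[p] q).totient : ℝ)) : ℝ) : ℂ) := by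
    push_cast; rfl
  rw [h4] at h1
  rw [Complex.ofReal_inj.mp h1]
  -- now a real computation
  have sum1 : ∑ p ∈ q.primeFactors, ∑ k ∈ Finset.Icc 1 (q.factorization p),
      Real.log p * (q.totient : ℝ) = Real.log q * q.totient := by
    have hf : ∀ d, ¬ IsPrimePow d → (vonMangoldt d) * (q.totient : ℝ) = 0 := fun d hd => by
      rw [vonMangoldt_eq_zero_iff.mpr hd, zero_mul]
    have := (sum_divisors_primePow hq (fun d => (vonMangoldt d) * (q.totient : ℝ)) hf).symm
    rw [← Finset.sum_mul, vonMangoldt_sum] at this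
    rw [← this]
    refine Finset.sum_congr rfl fun p hp => Finset.sum_congr rfl fun k hk => ?_
    rw [Nat.mem_primeFactors] at hp
    rw [Finset.mem_Icc] at hk
    rw [vonMangoldt_apply_pow (by omega), vonMangoldt_apply_prime hp.1]
  have sum2 : ∀ p ∈ q.primeFactors, ∑ k ∈ Finset.Icc 1 (q.factorization p),
      Real.log p * (((p ^ (k-1) * ordCompl[p] q).totient : ℝ))
      = (q.totient : ℝ) * (Real.log p / ((p : ℝ) - 1)) := by
    intro p hp
    rw [Nat.mem_primeFactors] at hp
    obtain ⟨hpp, hpq, -⟩ := hp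
    have he : 0 < q.factorization p := hpp.factorization_pos_of_dvd hq hpq
    rw [← Finset.mul_sum]
    have : ∑ k ∈ Finset.Icc 1 (q.factorization p),
        (((p ^ (k-1) * ordCompl[p] q).totient : ℝ))
        = (((ordCompl[p] q).totient * p ^ (q.factorization p - 1) : ℕ) : ℝ) := by
      rw [← Nat.cast_sum]
      congr 1
      exact sum_totient_prime_pow_mul hpp (Nat.coprime_ordCompl hpp hq) he
    rw [this, totient_eq_ordCompl_mul hq hpp hpq]
    have hp1 : (1 : ℝ) < p := by exact_mod_cast hpp.one_lt
    have hcast : ((p : ℝ) - 1) = ((p - 1 : ℕ) : ℝ) := by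
      have := hpp.one_lt
      push_cast [Nat.cast_sub (le_of_lt hpp.one_lt)]
      ring
    have hne : ((p - 1 : ℕ) : ℝ) ≠ 0 :=
      Nat.cast_ne_zero.mpr (by have := hpp.one_lt; omega)
    rw [hcast]
    push_cast [hne]
    field_simp
  calc ∑ p ∈ q.primeFactors, ∑ k ∈ Finset.Icc 1 (q.factorization p),
        Real.log p * ((q.totient : ℝ) - ((p ^ (k-1) * ordCompl[p] q).totient : ℝ))
      = (∑ p ∈ q.primeFactors, ∑ k ∈ Finset.Icc 1 (q.factorization p),
          Real.log p * (q.totient : ℝ))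
        - ∑ p ∈ q.primeFactors, ∑ k ∈ Finset.Icc 1 (q.factorization p),
          Real.log p * ((p ^ (k-1) * ordCompl[p] q).totient : ℝ) := by
        rw [← Finset.sum_sub_distrib]
        refine Finset.sum_congr rfl fun p _ => ?_
        rw [← Finset.sum_sub_distrib]
        refine Finset.sum_congr rfl fun k _ => ?_
        ring
    _ = Real.log q * q.totient
        - ∑ p ∈ q.primeFactors, (q.totient : ℝ) * (Real.log p / ((p : ℝ) - 1)) := by
        rw [sum1, Finset.sum_congr rfl sum2]
    _ = (q.totient : ℝ) * (Real.log q - ∑ p ∈ q.primeFactors, Real.log p / ((p : ℝ) - 1)) := by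
        rw [← Finset.mul_sum, mul_sub, mul_comm (Real.log ↑q)]

end L5
section L6
open DirichletCharacter ArithmeticFunction

theorem sum_char_mul_log_conductor (q : ℕ) [NeZero q] (a : ZMod q) (ha : IsUnit a)
    (hane : a ≠ 1) :
    (∑ χ : DirichletCharacter ℂ q, χ a * (Real.log χ.conductor : ℂ)) =
      -(q.totient : ℂ) *
        ((vonMangoldt (q / Nat.gcd q (a - 1).val)
          / ((q / Nat.gcd q (a - 1).val).totient : ℝ) : ℝ) : ℂ) := by
  have hq : q ≠ 0 := NeZero.ne q
  set v : ℕ := (a - 1).val with hv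
  set g : ℕ := Nat.gcd q v with hg
  set n0 : ℕ := q / g with hn0
  have hgq : g ∣ q := Nat.gcd_dvd_left q v
  have hg0 : g ≠ 0 := fun h => hq (Nat.eq_zero_of_gcd_eq_zero_left h)
  have hqn : q = n0 * g := (Nat.div_mul_cancel hgq).symm
  have hn00 : n0 ≠ 0 := fun h => hq (by rw [hqn, h, zero_mul])
  have hn01 : 1 < n0 := by
    have hv0 : v ≠ 0 := fun h => hane (by
      have : a - 1 = 0 := (ZMod.val_eq_zero _).mp h
      rwa [sub_eq_zero] at this)
    have hvq : v < q := ZMod.val_lt _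
    have hgv : g ∣ v := Nat.gcd_dvd_right q v
    have hgle : g ≤ v := Nat.le_of_dvd (Nat.pos_of_ne_zero hv0) hgv
    by_contra hcon
    push_neg at hcon
    interval_cases n0
    · exact hq (by omega)
    · rw [one_mul] at hqn
      omega
  have hn0q : n0 ∣ q := ⟨g, hqn⟩
  -- condition translation
  have cond : ∀ p k : ℕ, p.Prime → p ∣ q → 1 ≤ k → k ≤ q.factorization p →
      (p ^ (k-1) * ordCompl[p] q ∣ g ↔ n0 ∣ p ^ (q.factorization p - k + 1)) := by
    intro p k hpp hpq hk1 hke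
    have hD0 : p ^ (k-1) * ordCompl[p] q ≠ 0 :=
      Nat.mul_ne_zero (pow_ne_zero _ hpp.pos.ne') (Nat.ordCompl_pos p hq).ne'
    have hDmul : (p ^ (k-1) * ordCompl[p] q) * p ^ (q.factorization p - k + 1) = q := by
      have h1 : p ^ (k-1) * p ^ (q.factorization p - k + 1) = p ^ q.factorization p := by
        rw [← pow_add]
        congr 1
        omega
      calc (p ^ (k-1) * ordCompl[p] q) * p ^ (q.factorization p - k + 1)
          = (p ^ (k-1) * p ^ (q.factorization p - k + 1)) * ordCompl[p] q := by ring
        _ = p ^ q.factorization p * ordCompl[p] q := by rw [h1]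
        _ = q := Nat.ordProj_mul_ordCompl_eq_self q p
    constructor
    · rintro ⟨t, hgt⟩
      refine ⟨t, ?_⟩
      have h2 : (p ^ (k-1) * ordCompl[p] q) * p ^ (q.factorization p - k + 1)
          = (p ^ (k-1) * ordCompl[p] q) * (n0 * t) :=
        calc (p ^ (k-1) * ordCompl[p] q) * p ^ (q.factorization p - k + 1)
            = q := hDmul
          _ = n0 * g := hqn
          _ = n0 * (p ^ (k-1) * ordCompl[p] q * t) := by rw [hgt]
          _ = (p ^ (k-1) * ordCompl[p] q) * (n0 * t) := by ring
      exact Nat.eq_of_mul_eq_mul_left (Nat.pos_of_ne_zero hD0) h2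
    · rintro ⟨s, hs⟩
      refine ⟨s, ?_⟩
      have h2 : n0 * g = n0 * (p ^ (k-1) * ordCompl[p] q * s) :=
        calc n0 * g = q := hqn.symm
          _ = (p ^ (k-1) * ordCompl[p] q) * p ^ (q.factorization p - k + 1) := hDmul.symm
          _ = (p ^ (k-1) * ordCompl[p] q) * (n0 * s) := by rw [hs]
          _ = n0 * (p ^ (k-1) * ordCompl[p] q * s) := by ring
      exact Nat.eq_of_mul_eq_mul_left (Nat.pos_of_ne_zero hn00) h2
  rw [master a ha, if_neg hane]
  by_cases hpow : IsPrimePow n0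
  · obtain ⟨P, J, hPp, hJ0, hPJ⟩ := hpow
    have hP : P.Prime := Nat.prime_iff.mpr hPp
    have hPJq : P ^ J ∣ q := hPJ ▸ hn0q
    have hPq : P ∣ q := (dvd_pow_self P hJ0.ne').trans hPJq
    have hPmem : P ∈ q.primeFactors := Nat.mem_primeFactors.mpr ⟨hP, hPq, hq⟩
    have hJe : J ≤ q.factorization P := (Nat.Prime.pow_dvd_iff_le_factorization hP hq).mp hPJq
    set e : ℕ := q.factorization P with he
    set m : ℕ := ordCompl[P] q with hm
    rw [Finset.sum_eq_single_of_mem P hPmem ?side]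
    case side =>
      intro p hp hne
      rw [Nat.mem_primeFactors] at hp
      refine Finset.sum_eq_zero fun k hk => ?_
      rw [Finset.mem_Icc] at hk
      have hcond : ¬ (p ^ (k-1) * ordCompl[p] q ∣ g) := by
        intro hdvd
        have h1 : n0 ∣ p ^ (q.factorization p - k + 1) :=
          (cond p k hp.1 hp.2.1 hk.1 hk.2).mp hdvd
        have h2 : P ∣ p ^ (q.factorization p - k + 1) :=
          ((dvd_pow_self P hJ0.ne').trans (hPJ ▸ h1))
        exact hne ((Nat.prime_dvd_prime_iff_eq hP hp.1).mp (hP.dvd_of_dvd_pow h2)).symm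
      rw [if_neg hcond]
      ring
    -- main term
    have step : ∀ k ∈ Finset.Icc 1 e,
        (Real.log P : ℂ) * (0 - (if P ^ (k-1) * m ∣ g then ((P ^ (k-1) * m).totient : ℂ) else 0))
        = if k ≤ e - J + 1 then -((Real.log P : ℂ) * (((P ^ (k-1) * m).totient : ℕ) : ℂ)) else 0 := by
      intro k hk
      rw [Finset.mem_Icc] at hk
      have hiff : P ^ (k-1) * m ∣ g ↔ k ≤ e - J + 1 := by
        rw [cond P k hP hPq hk.1 hk.2, ← hPJ]
        rw [Nat.pow_dvd_pow_iff_le_right hP.one_lt]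
        omega
      by_cases hcase : k ≤ e - J + 1
      · rw [if_pos (hiff.mpr hcase), if_pos hcase]; ring
      · rw [if_neg (fun h => hcase (hiff.mp h)), if_neg hcase]; ring
    rw [Finset.sum_congr rfl step, ← Finset.sum_filter]
    have hfilter : (Finset.Icc 1 e).filter (fun k => k ≤ e - J + 1)
        = Finset.Icc 1 (e - J + 1) := by
      ext k
      simp only [Finset.mem_filter, Finset.mem_Icc]
      omega
    rw [hfilter]
    have htots : ∑ k ∈ Finset.Icc 1 (e - J + 1), (P ^ (k-1) * m).totient
        = m.totient * P ^ (e - J) := by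
      rw [sum_totient_prime_pow_mul hP (Nat.coprime_ordCompl hP hq) (by omega)]
      rw [show e - J + 1 - 1 = e - J from by omega, ← hm]
    have hsum : ∑ k ∈ Finset.Icc 1 (e - J + 1),
        -((Real.log P : ℂ) * (((P ^ (k-1) * m).totient : ℕ) : ℂ))
        = -((Real.log P : ℂ) * ((m.totient * P ^ (e - J) : ℕ) : ℂ)) := by
      rw [Finset.sum_neg_distrib, ← Finset.mul_sum, ← Nat.cast_sum, htots]
    rw [hsum, ← hPJ]
    -- final numeric identity
    have hΛ : vonMangoldt (P ^ J) = Real.log P := by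
      rw [vonMangoldt_apply_pow hJ0.ne', vonMangoldt_apply_prime hP]
    rw [hΛ]
    have hnat : q.totient = (m.totient * P ^ (e - J)) * (P ^ J).totient := by
      rw [Nat.totient_prime_pow hP hJ0, totient_eq_ordCompl_mul hq hP hPq, ← hm, ← he]
      have : P ^ (e - J) * P ^ (J - 1) = P ^ (e - 1) := by
        rw [← pow_add]; congr 1; omega
      calc m.totient * (P ^ (e-1) * (P-1)) = m.totient * ((P ^ (e-J) * P ^ (J-1)) * (P-1)) := by
            rw [this]
        _ = m.totient * P ^ (e - J) * (P ^ (J-1) * (P-1)) := by ring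
    have htot0 : ((P ^ J).totient : ℝ) ≠ 0 :=
      Nat.cast_ne_zero.mpr (Nat.totient_pos.mpr (pow_pos hP.pos J)).ne'
    have hreal : Real.log P * ((m.totient * P ^ (e - J) : ℕ) : ℝ)
        = (q.totient : ℝ) * (Real.log P / ((P ^ J).totient : ℝ)) := by
      rw [hnat]
      push_cast
      field_simp
    calc -((Real.log P : ℂ) * ((m.totient * P ^ (e - J) : ℕ) : ℂ))
        = -(((Real.log P * ((m.totient * P ^ (e - J) : ℕ) : ℝ)) : ℝ) : ℂ) := by push_cast; ring
      _ = -((((q.totient : ℝ) * (Real.log P / ((P ^ J).totient : ℝ))) : ℝ) : ℂ) := by rw [hreal]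
      _ = -(q.totient : ℂ) * ((Real.log P / ((P ^ J).totient : ℝ) : ℝ) : ℂ) := by
          push_cast; ring
  · -- n0 not a prime power: both sides vanish
    have hΛ : vonMangoldt n0 = 0 := vonMangoldt_eq_zero_iff.mpr hpow
    rw [hΛ]
    rw [show ((0 / (n0.totient : ℝ) : ℝ) : ℂ) = 0 by rw [zero_div]; exact Complex.ofReal_zero]
    rw [mul_zero]
    refine Finset.sum_eq_zero fun p hp => Finset.sum_eq_zero fun k hk => ?_
    rw [Nat.mem_primeFactors] at hp
    rw [Finset.mem_Icc] at hk
    have hcond : ¬ (p ^ (k-1) * ordCompl[p] q ∣ g) := by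
      intro hdvd
      have h1 : n0 ∣ p ^ (q.factorization p - k + 1) := (cond p k hp.1 hp.2.1 hk.1 hk.2).mp hdvd
      obtain ⟨j, hjle, hj⟩ := (Nat.dvd_prime_pow hp.1).mp h1
      have hj0 : 0 < j := by
        rcases Nat.eq_zero_or_pos j with h | h
        · rw [h, pow_zero] at hj; omega
        · exact h
      exact hpow ⟨p, j, hp.1.prime, hj0, hj.symm⟩
    rw [if_neg hcond]
    ring

end L6

/-- **Proposition (sums of `log` of conductors over characters).** For a positive integer `q`:
`Σ_{χ mod q} log q_χ = φ(q)(log q − Σ_{p∣q} log p/(p−1))`, where `q_χ` is the conductor of `χ`;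
and for a reduced residue `a ≢ 1 (mod q)`,
`Σ_{χ mod q} χ(a) log q_χ = −φ(q) Λ(q/(q,a−1))/φ(q/(q,a−1))`. -/
theorem sum_log_conductor (q : ℕ) [NeZero q] :
    (∑ χ : DirichletCharacter ℂ q, Real.log χ.conductor) =
      (q.totient : ℝ) * (Real.log q - ∑ p ∈ q.primeFactors, Real.log p / (p - 1)) ∧
    ∀ a : ZMod q, IsUnit a → a ≠ 1 →
      (∑ χ : DirichletCharacter ℂ q, χ a * (Real.log χ.conductor : ℂ)) =
        -(q.totient : ℂ) *
          ((vonMangoldt (q / Nat.gcd q (a - 1).val) / ((q / Nat.gcd q (a - 1).val).totient : ℝ) : ℝ) : ℂ) := by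
  exact ⟨sum_log_conductor' q, fun a ha hane => sum_char_mul_log_conductor q a ha hane⟩
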